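/- Assume the periodic perforations, Assumption (A2) and the boundary-measure bound as described in the context, where (𝒪_k)_{k∈ℤ^d} is any family of subsets of ℝ^d satisfying (A2). Then ∑_{k∈ℤ^d} vol(𝒪_k Δ 𝒪_k^per) < ∞, where vol denotes Lebesgue measure and A Δ B = (A ∖ B) ∪ (B ∖ A) is the symmetric difference. -/

import Mathlib

open MeasureTheory Metric Set Filter Topology Asymptotics RealInnerProductSpace Pointwise

noncomputable section

abbrev Euc (d : ℕ) := EuclideanSpace ℝ (Fin d)

def unitCube (d : ℕ) : Set (Euc d) := {x | ∀ i, x i ∈ Set.Ioo (0:ℝ) 1}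

def closedUnitCube (d : ℕ) : Set (Euc d) := {x | ∀ i, x i ∈ Set.Icc (0:ℝ) 1}

def box {d : ℕ} (a b : Fin d → ℝ) : Set (Euc d) := {x | ∀ i, x i ∈ Set.Icc (a i) (b i)}

def cell (d : ℕ) (k : Fin d → ℤ) : Set (Euc d) := {x | ∀ i, x i - (k i : ℝ) ∈ Set.Ioo (0:ℝ) 1}

def perHole {d : ℕ} (Oper : Set (Euc d)) (k : Fin d → ℤ) : Set (Euc d) :=
  {x | (show Euc d from WithLp.toLp 2 (fun i => x i - (k i : ℝ))) ∈ Oper}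

def perHoles {d : ℕ} (Oper : Set (Euc d)) : Set (Euc d) := ⋃ k : Fin d → ℤ, perHole Oper k

def holes {d : ℕ} (O : (Fin d → ℤ) → Set (Euc d)) : Set (Euc d) := ⋃ k, O k

def perPlus {d : ℕ} (Oper : Set (Euc d)) (k : Fin d → ℤ) (a : ℝ) : Set (Euc d) :=
  {x | Metric.infDist x (perHole Oper k) < a}

def perMinus {d : ℕ} (Oper : Set (Euc d)) (k : Fin d → ℤ) (a : ℝ) : Set (Euc d) :=
  {x ∈ perHole Oper k | a < Metric.infDist x (frontier (perHole Oper k))}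

def lap {d : ℕ} (w : Euc d → ℝ) (x : Euc d) : ℝ :=
  ∑ i, fderiv ℝ (fun y => fderiv ℝ w y (EuclideanSpace.single i 1)) x (EuclideanSpace.single i 1)

/-! ### Auxiliary lemmas -/

/-- The translation vector associated to `k ∈ ℤ^d`. -/
def kvec {d : ℕ} (k : Fin d → ℤ) : Euc d := WithLp.toLp 2 (fun i => (k i : ℝ))

lemma aux_infDist_frontier_le {E : Type*} [NormedAddCommGroup E] [NormedSpace ℝ E]
    [FiniteDimensional ℝ E] {s : Set E} (hs : s.Nonempty) {x : E} (hx : x ∉ s) :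
    Metric.infDist x (frontier s) ≤ Metric.infDist x s := by
  have h2 : sᶜ ≠ univ := by
    intro h
    obtain ⟨y, hy⟩ := hs
    exact (h ▸ mem_univ y : y ∈ sᶜ) hy
  have hx' : x ∈ sᶜ := hx
  obtain ⟨y, hy, hyd⟩ := exists_mem_frontier_infDist_compl_eq_dist hx' h2
  rw [frontier_compl] at hy
  rw [compl_compl] at hyd
  calc Metric.infDist x (frontier s) ≤ dist x y := Metric.infDist_le_dist_of_mem hy
  _ = Metric.infDist x s := hyd.symm

lemma aux_perHole_eq {d : ℕ} (Oper : Set (Euc d)) (k : Fin d → ℤ) :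
    perHole Oper k = (fun x : Euc d => x - kvec k) ⁻¹' Oper := by
  ext x
  have h : (x - kvec k) = (show Euc d from WithLp.toLp 2 (fun i => x i - (k i : ℝ))) := by
    ext i; rfl
  simp only [perHole, mem_setOf_eq, mem_preimage, h]

lemma aux_preimage_sub_infDist {d : ℕ} (F : Set (Euc d)) (v : Euc d) (x : Euc d) :
    Metric.infDist x ((fun y : Euc d => y - v) ⁻¹' F) = Metric.infDist (x - v) F := by
  have himg : (fun y : Euc d => y - v) ⁻¹' F = (fun y : Euc d => y + v) '' F := by
    ext z
    constructor
    · intro h; exact ⟨z - v, h, sub_add_cancel z v⟩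
    · rintro ⟨y, hy, rfl⟩; simpa using hy
  have hiso : Isometry (fun y : Euc d => y + v) :=
    Isometry.of_dist_eq (fun a b => dist_add_right a b v)
  have h2 := Metric.infDist_image (x := x - v) (t := F) hiso
  rw [himg, ← h2, sub_add_cancel x v]

lemma aux_frontier_perHole {d : ℕ} (Oper : Set (Euc d)) (k : Fin d → ℤ) :
    frontier (perHole Oper k) = (fun x : Euc d => x - kvec k) ⁻¹' frontier Oper := by
  rw [aux_perHole_eq]
  have h : (fun x : Euc d => x - kvec k) = ⇑(Homeomorph.subRight (kvec k)) := rfl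
  rw [h]
  exact (Homeomorph.preimage_frontier (Homeomorph.subRight (kvec k)) Oper).symm

lemma aux_volume_preimage_sub {d : ℕ} (v : Euc d) (S : Set (Euc d)) :
    volume ((fun x : Euc d => x - v) ⁻¹' S) = volume S := by
  simp only [sub_eq_add_neg]
  exact measure_preimage_add_right volume (-v) S

/-- summability of the measures of the symmetric differences
`𝒪_k Δ 𝒪_k^per` (first assertion of Lemma A.1 of the paper). -/
theorem symmDiff_volume_summable (d : ℕ) (hd : 2 ≤ d)
    (Oper : Set (Euc d)) (hOperOpen : IsOpen Oper) (hOperNe : Oper.Nonempty)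
    (hOperQ : closure Oper ⊆ unitCube d)
    (O : (Fin d → ℤ) → Set (Euc d))
    (α : (Fin d → ℤ) → ℝ) (hαpos : ∀ k, 0 ≤ α k) (hαsum : Summable α)
    (hA2 : ∀ k, perMinus Oper k (α k) ⊆ O k ∧ O k ⊆ perPlus Oper k (α k))
    (Cb ab : ℝ) (hCb : 0 < Cb) (hab : 0 < ab)
    (hFederer : ∀ a : ℝ, 0 < a → a < ab →
      volume {x : Euc d | Metric.infDist x (frontier Oper) < a} ≤ ENNReal.ofReal (Cb * a)) :
    ∑' k : Fin d → ℤ, volume (symmDiff (O k) (perHole Oper k)) < ⊤ := by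
  classical
  set F := frontier Oper with hF
  -- `Oper` is not the whole space
  have hOper_ne_univ : Oper ≠ univ := by
    intro h
    have hz : (WithLp.toLp 2 (fun _ => (2:ℝ)) : Euc d) ∈ Oper := h ▸ mem_univ _
    have h2 := hOperQ (subset_closure hz) ⟨0, by omega⟩
    exact absurd h2.2 (by norm_num)
  -- the frontier of `Oper` is nonempty
  have hFne : F.Nonempty := nonempty_frontier_iff.2 ⟨hOperNe, hOper_ne_univ⟩
  -- the frontier of `Oper` is bounded
  have hFbdd : ∀ y ∈ F, ‖y‖ ≤ Real.sqrt d := by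
    intro y hy
    have hy' : y ∈ unitCube d := hOperQ (frontier_subset_closure hy)
    rw [EuclideanSpace.norm_eq]
    apply Real.sqrt_le_sqrt
    calc ∑ i, ‖y i‖ ^ 2 ≤ ∑ _i : Fin d, (1:ℝ) := by
          refine Finset.sum_le_sum fun i _ => ?_
          have h1 := hy' i
          rw [Real.norm_eq_abs, abs_of_pos h1.1]
          nlinarith [h1.1, h1.2]
      _ = (d : ℝ) := by simp
  -- the Federer bound for closed neighbourhoods of the frontier
  have hBle : ∀ t : ℝ, 0 ≤ t → t < ab →
      volume {x : Euc d | Metric.infDist x F ≤ t} ≤ ENNReal.ofReal (Cb * t) := by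
    intro t ht htab
    have hlim : Tendsto (fun s : ℝ => ENNReal.ofReal (Cb * s)) (𝓝[>] t)
        (𝓝 (ENNReal.ofReal (Cb * t))) :=
      (ENNReal.continuous_ofReal.tendsto _).comp
        (((continuous_const.mul continuous_id).tendsto t).mono_left nhdsWithin_le_nhds)
    have hev : ∀ᶠ s in 𝓝[>] t,
        volume {x : Euc d | Metric.infDist x F ≤ t} ≤ ENNReal.ofReal (Cb * s) := by
      filter_upwards [Ioo_mem_nhdsGT_of_mem ⟨le_refl t, htab⟩] with s hs
      refine le_trans (measure_mono ?_) (hFederer s (lt_of_le_of_lt ht hs.1) hs.2)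
      intro x hx
      exact lt_of_le_of_lt hx hs.1
    exact ge_of_tendsto hlim hev
  -- closed neighbourhoods of the frontier always have finite volume
  have hBfin : ∀ t : ℝ, volume {x : Euc d | Metric.infDist x F ≤ t} < ⊤ := by
    intro t
    refine lt_of_le_of_lt (measure_mono ?_)
      (measure_closedBall_lt_top (x := (0 : Euc d)) (r := Real.sqrt d + |t| + 1))
    intro x hx
    have h1 : Metric.infDist x F < |t| + 1 :=
      lt_of_le_of_lt hx (by linarith [le_abs_self t])
    obtain ⟨y, hy, hxy⟩ := (Metric.infDist_lt_iff hFne).1 h1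
    rw [mem_closedBall, dist_zero_right]
    have h3 : ‖x‖ ≤ ‖x - y‖ + ‖y‖ := by
      calc ‖x‖ = ‖x - y + y‖ := by rw [sub_add_cancel]
      _ ≤ ‖x - y‖ + ‖y‖ := norm_add_le _ _
    have h4 : ‖x - y‖ ≤ |t| + 1 := by rw [← dist_eq_norm]; exact hxy.le
    linarith [hFbdd y hy]
  -- the per-cell bound
  have hkey : ∀ k, volume (symmDiff (O k) (perHole Oper k))
      ≤ volume {x : Euc d | Metric.infDist x F ≤ α k} := by
    intro k
    have hsub : symmDiff (O k) (perHole Oper k)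
        ⊆ {x : Euc d | Metric.infDist x (frontier (perHole Oper k)) ≤ α k} := by
      intro x hx
      rcases Set.mem_symmDiff.1 hx with ⟨hxO, hxP⟩ | ⟨hxP, hxO⟩
      · have h1 : Metric.infDist x (perHole Oper k) < α k := (hA2 k).2 hxO
        have hne : (perHole Oper k).Nonempty := by
          obtain ⟨p, hp⟩ := hOperNe
          refine ⟨(show Euc d from WithLp.toLp 2 (fun i => p i + (k i : ℝ))), ?_⟩
          have hpt : (show Euc d from WithLp.toLp 2 (
              fun i => (show Euc d from WithLp.toLp 2 (fun j => p j + (k j : ℝ))) i - (k i : ℝ))) = p := by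
            ext i; simp
          show (show Euc d from WithLp.toLp 2 (
            fun i => (show Euc d from WithLp.toLp 2 (fun j => p j + (k j : ℝ))) i - (k i : ℝ))) ∈ Oper
          rw [hpt]; exact hp
        exact le_trans (aux_infDist_frontier_le hne hxP) h1.le
      · by_contra h
        simp only [mem_setOf_eq, not_le] at h
        exact hxO ((hA2 k).1 ⟨hxP, h⟩)
    calc volume (symmDiff (O k) (perHole Oper k))
        ≤ volume {x : Euc d | Metric.infDist x (frontier (perHole Oper k)) ≤ α k} :=
          measure_mono hsub
      _ = volume {x : Euc d | Metric.infDist x F ≤ α k} := by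
          have hset : {x : Euc d | Metric.infDist x (frontier (perHole Oper k)) ≤ α k}
              = (fun x : Euc d => x - kvec k) ⁻¹' {y : Euc d | Metric.infDist y F ≤ α k} := by
            ext x
            simp only [mem_setOf_eq, mem_preimage, aux_frontier_perHole,
              aux_preimage_sub_infDist, hF]
          rw [hset, aux_volume_preimage_sub]
  -- split the sum according to whether `α k < ab`
  have hfin : {k : Fin d → ℤ | ¬ α k < ab}.Finite := by
    have h1 : ∀ᶠ k in cofinite, α k < ab :=
      hαsum.tendsto_cofinite_zero.eventually_lt_const hab
    exact Filter.eventually_cofinite.1 h1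
  set g : (Fin d → ℤ) → ENNReal := fun k => volume {x : Euc d | Metric.infDist x F ≤ α k} with hg
  have hsplit : ∀ k, g k ≤ ENNReal.ofReal (Cb * α k) + (if α k < ab then 0 else g k) := by
    intro k
    by_cases hk : α k < ab
    · simp only [hk, if_true, add_zero]
      exact hBle (α k) (hαpos k) hk
    · simp only [hk, if_false]
      exact le_add_self
  calc ∑' k : Fin d → ℤ, volume (symmDiff (O k) (perHole Oper k))
      ≤ ∑' k, g k := ENNReal.tsum_le_tsum hkey
    _ ≤ ∑' k, (ENNReal.ofReal (Cb * α k) + (if α k < ab then 0 else g k)) :=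
        ENNReal.tsum_le_tsum hsplit
    _ = (∑' k, ENNReal.ofReal (Cb * α k)) + ∑' k, (if α k < ab then 0 else g k) :=
        ENNReal.tsum_add
    _ < ⊤ := by
        apply ENNReal.add_lt_top.2
        constructor
        · rw [← ENNReal.ofReal_tsum_of_nonneg (fun k => mul_nonneg hCb.le (hαpos k))
            (hαsum.mul_left Cb)]
          exact ENNReal.ofReal_lt_top
        · have h0 : ∀ k ∉ hfin.toFinset, (if α k < ab then 0 else g k) = 0 := by
            intro k hk
            have hk' : α k < ab := by
              by_contra hc
              exact hk (hfin.mem_toFinset.2 hc)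
            simp [hk']
          rw [tsum_eq_sum h0]
          refine ENNReal.sum_lt_top.2 fun k _ => ?_
          by_cases hk : α k < ab
          · simp [hk]
          · simp only [hk, if_false]
            exact hBfin (α k)
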